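/- Let A ∈ ℝ^{m×n}, P ∈ ℝ^{m×r}, S ∈ ℝ^{r×r}, and Q ∈ ℝ^{n×r} with QᵀQ = I_r, and let b ∈ ℝ^n. Define p = Qᵀb, e = b − Q p, k = ‖e‖₂, and suppose k ≠ 0; set q = e/k. Then the (m+1)×n matrix [A; bᵀ] obtained by appending the row bᵀ to A satisfies the exact identity [A; bᵀ] = [A − P S Qᵀ; 0] + blkdiag(P, 1)·S′·[Q, q]ᵀ, where S′ = [[S, 0], [pᵀ, k]] ∈ ℝ^{(r+1)×(r+1)}. -/

import Mathlib

open Matrix BigOperators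

/-- The exact factorization identity underlying the incremental SVD row
update (equations (26)–(27) of the paper). -/
theorem incremental_svd_row_update_identity
    {m n r : ℕ}
    (A : Matrix (Fin m) (Fin n) ℝ)
    (P : Matrix (Fin m) (Fin r) ℝ)
    (S : Matrix (Fin r) (Fin r) ℝ)
    (Q : Matrix (Fin n) (Fin r) ℝ)
    (b : Fin n → ℝ)
    (hQ : Qᵀ * Q = 1)
    (p : Fin r → ℝ) (hp : p = Qᵀ *ᵥ b)
    (e : Fin n → ℝ) (he : e = b - Q *ᵥ p)
    (k : ℝ) (hk : k = Real.sqrt (∑ i, e i ^ 2)) (hk0 : k ≠ 0)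
    (q : Fin n → ℝ) (hq : q = k⁻¹ • e) :
    Matrix.fromRows A (Matrix.of fun (_ : Fin 1) j => b j) =
      Matrix.fromRows (A - P * S * Qᵀ) 0 +
        Matrix.fromBlocks P 0 0 (1 : Matrix (Fin 1) (Fin 1) ℝ) *
          Matrix.fromBlocks S 0 (Matrix.of fun (_ : Fin 1) i => p i)
            (Matrix.of fun (_ : Fin 1) (_ : Fin 1) => k) *
          (Matrix.fromCols Q (Matrix.of fun i (_ : Fin 1) => q i))ᵀ := by
  have hkq : ∀ j, k * q j = e j := by
    intro j; rw [hq]; simp [mul_inv_cancel_left₀ hk0]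
  rw [Matrix.transpose_fromCols, Matrix.fromBlocks_multiply,
    Matrix.fromBlocks_mul_fromRows]
  ext (i | i) j
  · simp [Matrix.mul_apply]
  · have hb : b j = (Q *ᵥ p) j + e j := by rw [he]; simp
    simp only [Matrix.fromRows_apply_inr, Matrix.add_apply, Matrix.of_apply,
      Matrix.zero_apply, Matrix.mul_apply, Matrix.transpose_apply,
      Matrix.one_apply, Matrix.add_apply]
    rw [hb]
    simp [Matrix.mulVec, dotProduct, Matrix.mul_apply, hkq j,
      mul_comm, Fin.sum_univ_one, Fin.fin_one_eq_zero i]
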